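/- For a positive integer n, x(n) = z(n) − (r(n)+1)·m(n) < 0 if and only if either n ≤ 435, or n = 450, or 513 ≤ n ≤ 528. -/
import Mathlib

set_option maxRecDepth 100000
set_option maxHeartbeats 2000000

def msq (k : ℕ) : ℕ := (List.range 46).countP (fun M => decide (M*M ≤ k)) - 1
def rlog (n : ℕ) : ℕ := 11 - (List.range 11).countP (fun s => decide (n ≤ 2^s))

theorem small_aux : ∀ n < 1025, 1 ≤ n →
    (msq (2*n) * msq (2*n) ≤ 2*n ∧ 2*n < (msq (2*n)+1) * (msq (2*n)+1) ∧
     n ≤ 2 ^ rlog n ∧ (rlog n = 0 ∨ 2 ^ (rlog n - 1) < n) ∧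
     ((2*n-1)/3 < (rlog n + 1) * msq (2*n) ↔ (n ≤ 435 ∨ n = 450 ∨ (513 ≤ n ∧ n ≤ 528)))) := by
  decide

theorem key_aux : ∀ k : ℕ, 9*(k+12)^2 ≤ 2^(k+11) := by
  intro k
  induction k with
  | zero => norm_num
  | succ i ih =>
    calc 9*(i+1+12)^2 = 9*(i+13)^2 := by ring
      _ ≤ 18*(i+12)^2 := by ring_nf; omega
      _ = 2*(9*(i+12)^2) := by ring
      _ ≤ 2*2^(i+11) := Nat.mul_le_mul le_rfl ih
      _ = 2^(i+1+11) := by ring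

theorem stmt
    (z : ℕ → ℤ) (m r : ℕ → ℕ) (c x : ℕ → ℤ) (y : ℕ → ℚ)
    (hz : ∀ n : ℕ, 1 ≤ n → 3 * z n < 2 * (n : ℤ) ∧ ∀ w : ℤ, 3 * w < 2 * (n : ℤ) → w ≤ z n)
    (hm : ∀ n : ℕ, 1 ≤ n → (m n : ℤ) ^ 2 ≤ 2 * (n : ℤ) ∧ ∀ w : ℕ, (w : ℤ) ^ 2 ≤ 2 * (n : ℤ) → w ≤ m n)
    (hr : ∀ n : ℕ, 1 ≤ n → n ≤ 2 ^ r n ∧ ∀ s : ℕ, n ≤ 2 ^ s → r n ≤ s)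
    (hc : ∀ n : ℕ, c n = 2 * (n : ℤ) - 2 * z n + 2)
    (hx : ∀ n : ℕ, x n = z n - ((r n : ℤ) + 1) * (m n : ℤ))
    (hy : ∀ n : ℕ, y n = (2 : ℚ) ^ (c n - (m n : ℤ)) - (n : ℚ) ^ ((m n : ℤ) - 1)) :
    ∀ n : ℕ, 1 ≤ n →
      (x n < 0 ↔ n ≤ 435 ∨ n = 450 ∨ (513 ≤ n ∧ n ≤ 528)) := by
  intro n hn
  obtain ⟨hz1, hz2⟩ := hz n hn
  obtain ⟨hm1, hm2⟩ := hm n hn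
  obtain ⟨hr1, hr2⟩ := hr n hn
  rw [hx n]
  rcases le_or_gt n 1024 with hle | hgt
  · obtain ⟨q1, q2, q3, q4, q5⟩ := small_aux n (by omega) hn
    -- m n = msq (2n)
    have hm3 : msq (2*n) ≤ m n := by
      apply hm2
      rw [sq]
      exact_mod_cast q1
    have hm4 : m n ≤ msq (2*n) := by
      by_contra h
      push_neg at h
      have h1 : (msq (2*n) : ℤ) + 1 ≤ (m n : ℤ) := by exact_mod_cast h
      have q2' : (2*(n:ℤ)) < ((msq (2*n):ℤ)+1) * ((msq (2*n):ℤ)+1) := by exact_mod_cast q2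
      nlinarith [hm1, h1, q2']
    have hmval : m n = msq (2*n) := le_antisymm hm4 hm3
    -- r n = rlog n
    have hr3 : r n ≤ rlog n := hr2 _ q3
    have hr4 : rlog n ≤ r n := by
      rcases q4 with h0 | h0
      · omega
      · have h1 : 2 ^ (rlog n - 1) < 2 ^ (r n) := lt_of_lt_of_le h0 hr1
        have h2 := (Nat.pow_lt_pow_iff_right (by norm_num : 1 < 2)).mp h1
        omega
    have hrval : r n = rlog n := le_antisymm hr3 hr4
    -- z n = (2n-1)/3
    have hz3 : (((2*n-1)/3 : ℕ) : ℤ) ≤ z n := by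
      apply hz2
      have h1 : 3 * ((2*n-1)/3) < 2*n := by omega
      exact_mod_cast h1
    have hz4 : z n ≤ (((2*n-1)/3 : ℕ) : ℤ) := by omega
    have hzval : z n = (((2*n-1)/3 : ℕ) : ℤ) := le_antisymm hz4 hz3
    rw [hzval, hrval, hmval, sub_neg]
    exact_mod_cast q5
  · have hrhs : ¬(n ≤ 435 ∨ n = 450 ∨ (513 ≤ n ∧ n ≤ 528)) := by omega
    simp only [hrhs, iff_false, not_lt]
    have hkey : ((r n : ℤ) + 1) * (m n : ℤ) ≤ z n := by
      apply hz2
      -- facts about r n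
      have hR : 11 ≤ r n := by
        by_contra h
        push_neg at h
        have h1 : (2:ℕ)^(r n) ≤ 2^10 := Nat.pow_le_pow_right (by norm_num) (by omega)
        have h2 : (2:ℕ)^10 = 1024 := by norm_num
        omega
      have hlow : 2 ^ (r n - 1) < n := by
        by_contra h
        push_neg at h
        have := hr2 _ h
        omega
      have h9 : 9 * (r n + 1)^2 < 2 * n := by
        obtain ⟨j, hj⟩ : ∃ j, r n = j + 11 := ⟨r n - 11, by omega⟩
        have h1 := key_aux j
        have h2 : (2:ℕ)^(r n) = 2 * 2^(r n - 1) := by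
          rw [hj, show j + 11 - 1 = j + 10 from rfl]
          ring
        have h3 : (2:ℕ)^(r n - 1) < n := hlow
        have h4 : 9*(r n + 1)^2 ≤ 2^(r n) := by rw [hj]; exact h1
        calc 9 * (r n + 1)^2 ≤ 2 * 2^(r n - 1) := by rw [← h2]; exact h4
          _ < 2 * n := by omega
      have h9' : 9 * ((r n : ℤ) + 1)^2 < 2 * (n : ℤ) := by exact_mod_cast h9
      nlinarith [hm1, h9', sq_nonneg ((m n : ℤ) - 3*((r n : ℤ)+1)), sq_nonneg ((m n : ℤ) + 3*((r n : ℤ)+1))]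
    linarith
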